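/- Let K be a field and D = K[x]. Then R(D) is a discrete valuation ring with maximal ideal generated by 1/x; in fact R(D) = K[x⁻¹] localized at the prime ideal (x⁻¹). -/

import Mathlib

open Polynomial

noncomputable def recip (D : Type*) [CommRing D] [IsDomain D] : Subring (FractionRing D) :=
  Subring.closure {x | ∃ d : D, d ≠ 0 ∧ x = (algebraMap D (FractionRing D) d)⁻¹}

noncomputable section
namespace RecipAux

variable (K : Type*) [Field K]

abbrev F := FractionRing (Polynomial K)

def xx : F K := algebraMap (Polynomial K) (F K) Polynomial.X
def tt : F K := (xx K)⁻¹

variable {K}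

lemma hx : xx K ≠ 0 :=
  (map_ne_zero_iff _ (IsFractionRing.injective _ _)).2 Polynomial.X_ne_zero

lemma ht : tt K ≠ 0 := inv_ne_zero hx

lemma htx : tt K * xx K = 1 := inv_mul_cancel₀ hx

lemma algebraMap_eq_aeval (f : Polynomial K) :
    algebraMap (Polynomial K) (F K) f = Polynomial.aeval (xx K) f := by
  have : (IsScalarTower.toAlgHom K (Polynomial K) (F K)) = Polynomial.aeval (xx K) :=
    Polynomial.algHom_ext (by simp [xx])
  exact (DFunLike.congr_fun this f :)

end RecipAux
noncomputable section
namespace RecipAux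
variable {K : Type*} [Field K]

lemma trans_x : Transcendental K (xx K) := by
  rw [transcendental_iff_injective]
  have : (Polynomial.aeval (xx K) : Polynomial K →ₐ[K] F K) =
      (IsScalarTower.toAlgHom K (Polynomial K) (F K)) :=
    (Polynomial.algHom_ext (by simp [xx])).symm
  rw [this]
  exact IsFractionRing.injective _ _

lemma trans_t : Transcendental K (tt K) := by
  intro h
  exact trans_x (by simpa [tt] using h.inv)

def φ : Polynomial K →ₐ[K] F K := Polynomial.aeval (tt K)

lemma φ_inj : Function.Injective (φ (K := K)) :=
  transcendental_iff_injective.mp trans_t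

lemma φ_reflect_mul (f : Polynomial K) (N : ℕ) (h : f.natDegree ≤ N) :
    φ (reflect N f) * (xx K) ^ N = algebraMap (Polynomial K) (F K) f := by
  haveI := invertibleOfNonzero (hx (K := K))
  have key := Polynomial.eval₂_reflect_mul_pow (algebraMap K (F K)) (xx K) N f h
  have h1 : (⅟ (xx K) : F K) = tt K := invOf_eq_inv _
  rw [h1] at key
  rw [algebraMap_eq_aeval, Polynomial.aeval_def]
  rw [φ, Polynomial.aeval_def]
  exact key

end RecipAux
noncomputable section
namespace RecipAux
variable {K : Type*} [Field K]

def Asub : Subring (F K) :=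
  Subring.closure (Set.range (algebraMap K (F K)) ∪ {tt K})

lemma mem_Asub {z : F K} : z ∈ Asub ↔ ∃ p : Polynomial K, φ p = z := by
  have h1 := Algebra.adjoin_eq_ring_closure (R := K) ({tt K} : Set (F K))
  have h2 := Algebra.adjoin_singleton_eq_range_aeval K (tt K)
  constructor
  · intro hz
    have : z ∈ (Algebra.adjoin K ({tt K} : Set (F K))).toSubring := by
      rw [h1]; exact hz
    rw [Subalgebra.mem_toSubring, h2] at this
    obtain ⟨p, hp⟩ := this
    exact ⟨p, hp⟩
  · rintro ⟨p, rfl⟩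
    have : φ p ∈ (Algebra.adjoin K ({tt K} : Set (F K))).toSubring := by
      rw [Subalgebra.mem_toSubring, h2]; exact ⟨p, rfl⟩
    rwa [h1] at this

lemma natDegree_reflect_le {f : Polynomial K} {N : ℕ} (h : f.natDegree ≤ N) :
    (reflect N f).natDegree ≤ N := by
  refine natDegree_le_iff_coeff_eq_zero.mpr fun m hm => ?_
  rw [coeff_reflect, revAt_eq_self_of_lt hm]
  exact coeff_eq_zero_of_natDegree_lt (lt_of_le_of_lt h hm)

lemma coeff_reflect_N {f : Polynomial K} (N : ℕ) :
    (reflect N f).coeff N = f.coeff 0 := by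
  rw [coeff_reflect, revAt_le le_rfl, Nat.sub_self]

lemma coeff_reflect_zero {f : Polynomial K} {N : ℕ} (h : f.natDegree ≤ N) :
    (reflect N f).coeff 0 = f.leadingCoeff ∨ (reflect N f).coeff 0 = 0 := by
  rw [coeff_reflect, revAt_le (Nat.zero_le N), Nat.sub_zero]
  rcases eq_or_lt_of_le h with h' | h'
  · left; rw [← h']; rfl
  · right; exact coeff_eq_zero_of_natDegree_lt h'

end RecipAux
noncomputable section
namespace RecipAux
variable {K : Type*} [Field K]

abbrev Rr (K : Type*) [Field K] : Subring (F K) := recip (Polynomial K)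

lemma inv_mem_R {f : Polynomial K} (hf : f ≠ 0) :
    (algebraMap (Polynomial K) (F K) f)⁻¹ ∈ Rr K :=
  Subring.subset_closure ⟨f, hf, rfl⟩

lemma algC (a : K) : algebraMap (Polynomial K) (F K) (C a) = algebraMap K (F K) a := by
  rw [IsScalarTower.algebraMap_apply K (Polynomial K) (F K), Polynomial.algebraMap_eq]

lemma const_mem_R (a : K) : algebraMap K (F K) a ∈ Rr K := by
  rcases eq_or_ne a 0 with rfl | ha
  · simpa using (Rr K).zero_mem
  · have : algebraMap K (F K) a = (algebraMap (Polynomial K) (F K) (C a⁻¹))⁻¹ := by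
      rw [algC, map_inv₀, inv_inv]
    rw [this]
    exact inv_mem_R (by simp [ha])

lemma t_mem_R : tt K ∈ Rr K := Subring.subset_closure ⟨X, X_ne_zero, rfl⟩

lemma const_mul_mem_R {z : F K} (a : K) (hz : z ∈ Rr K) : algebraMap K (F K) a * z ∈ Rr K :=
  (Rr K).mul_mem (const_mem_R a) hz

lemma algNe {f : Polynomial K} (hf : f ≠ 0) : algebraMap (Polynomial K) (F K) f ≠ 0 :=
  (map_ne_zero_iff _ (IsFractionRing.injective _ _)).2 hf

lemma pow_div_mem (e : ℕ) : ∀ f : Polynomial K, f ≠ 0 → e < f.natDegree →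
    (xx K) ^ e / algebraMap (Polynomial K) (F K) f ∈ Rr K := by
  induction e with
  | zero => intro f hf _; simpa using inv_mem_R hf
  | succ e IH =>
    intro f hf he
    set q := f.divX with hq
    have hqdeg : e < q.natDegree := by
      rw [hq, natDegree_divX_eq_natDegree_tsub_one]; omega
    have hqne : q ≠ 0 := by
      intro h; rw [h] at hqdeg; simp at hqdeg
    set c := f.coeff 0 with hc
    have hfeq : algebraMap (Polynomial K) (F K) f =
        xx K * algebraMap (Polynomial K) (F K) q + algebraMap K (F K) c := by
      conv_lhs => rw [← divX_mul_X_add f]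
      push_cast [map_add, map_mul, algC]
      rw [algebraMap_eq_aeval]
      simp [xx, mul_comm]
      exact hc.symm
    have hF := algNe hf
    have hQ := algNe hqne
    have key : (xx K) ^ (e+1) / algebraMap (Polynomial K) (F K) f
        = (xx K) ^ e / algebraMap (Polynomial K) (F K) q
          - algebraMap K (F K) c * ((xx K) ^ e /
            (algebraMap (Polynomial K) (F K) q * algebraMap (Polynomial K) (F K) f)) := by
      field_simp
      linear_combination (-(xx K ^ e)) * hfeq
    rw [key]
    refine (Rr K).sub_mem (IH q hqne hqdeg) ?_
    rcases eq_or_ne c 0 with hc0 | hc0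
    · rw [hc0]; simpa using (Rr K).zero_mem
    · have hg : (C c⁻¹ * (q * f)) ≠ 0 := by
        simp [hc0, hqne, hf]
      have hgdeg : e < (C c⁻¹ * (q * f)).natDegree := by
        rw [natDegree_C_mul_eq_of_mul_eq_one (mul_inv_cancel₀ hc0),
          natDegree_mul hqne hf]
        omega
      have halg : algebraMap (Polynomial K) (F K) (C c⁻¹ * (q * f))
          = (algebraMap K (F K) c)⁻¹ *
            (algebraMap (Polynomial K) (F K) q * algebraMap (Polynomial K) (F K) f) := by
        rw [map_mul, map_mul, algC, map_inv₀]
      have hcne : algebraMap K (F K) c ≠ 0 := by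
        simpa using hc0
      have : algebraMap K (F K) c * ((xx K) ^ e /
            (algebraMap (Polynomial K) (F K) q * algebraMap (Polynomial K) (F K) f))
          = (xx K) ^ e / algebraMap (Polynomial K) (F K) (C c⁻¹ * (q * f)) := by
        rw [halg]
        field_simp
      rw [this]
      exact IH _ hg hgdeg

end RecipAux
noncomputable section
namespace RecipAux
variable {K : Type*} [Field K]

lemma const_mul_pow_div_mem (a : K) {e : ℕ} {f : Polynomial K} (hf : f ≠ 0)
    (he : e < f.natDegree) :
    algebraMap K (F K) a * ((xx K) ^ e / algebraMap (Polynomial K) (F K) f) ∈ Rr K := by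
  rcases eq_or_ne a 0 with rfl | ha
  · simpa using (Rr K).zero_mem
  · have hg : C a⁻¹ * f ≠ 0 := by simp [ha, hf]
    have hgdeg : e < (C a⁻¹ * f).natDegree := by
      rwa [natDegree_C_mul_eq_of_mul_eq_one (mul_inv_cancel₀ ha)]
    have hane : algebraMap K (F K) a ≠ 0 := by simpa using ha
    have : algebraMap K (F K) a * ((xx K) ^ e / algebraMap (Polynomial K) (F K) f)
        = (xx K) ^ e / algebraMap (Polynomial K) (F K) (C a⁻¹ * f) := by
      rw [map_mul, algC, map_inv₀]
      field_simp
    rw [this]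
    exact pow_div_mem _ _ hg hgdeg

lemma div_mem_of_lt {g f : Polynomial K} (hf : f ≠ 0) (h : g.natDegree < f.natDegree) :
    algebraMap (Polynomial K) (F K) g / algebraMap (Polynomial K) (F K) f ∈ Rr K := by
  have hgsum : algebraMap (Polynomial K) (F K) g
      = ∑ e ∈ g.support, algebraMap K (F K) (g.coeff e) * (xx K) ^ e := by
    conv_lhs => rw [g.as_sum_support, map_sum]
    refine Finset.sum_congr rfl fun e _ => ?_
    rw [← C_mul_X_pow_eq_monomial, map_mul, map_pow, algC]
    congr 1
  rw [hgsum, Finset.sum_div]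
  refine Subring.sum_mem _ fun e hee => ?_
  rw [mul_div_assoc]
  exact const_mul_pow_div_mem _ hf (lt_of_le_of_lt (le_natDegree_of_mem_supp _ hee) h)

lemma div_mem_of_le {g f : Polynomial K} (hf : f ≠ 0) (h : g.natDegree ≤ f.natDegree) :
    algebraMap (Polynomial K) (F K) g / algebraMap (Polynomial K) (F K) f ∈ Rr K := by
  rcases Nat.eq_zero_or_pos f.natDegree with hd0 | hd1
  · -- constant case
    have hf0 : f = C (f.coeff 0) := eq_C_of_natDegree_le_zero (le_of_eq hd0)
    have hg0 : g = C (g.coeff 0) := eq_C_of_natDegree_le_zero (by omega)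
    rw [hf0, hg0, algC, algC, ← map_div₀]
    exact const_mem_R _
  rcases lt_or_eq_of_le h with h | h
  · exact div_mem_of_lt hf h
  -- top monomial lemma
  have hlc : f.leadingCoeff ≠ 0 := leadingCoeff_ne_zero.mpr hf
  have hlc' : algebraMap K (F K) f.leadingCoeff ≠ 0 := by simpa using hlc
  have hF := algNe hf
  have hfe : algebraMap (Polynomial K) (F K) f
      = algebraMap (Polynomial K) (F K) f.eraseLead
        + algebraMap K (F K) f.leadingCoeff * (xx K) ^ f.natDegree := by
    conv_lhs => rw [← eraseLead_add_C_mul_X_pow f]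
    rw [map_add, map_mul, map_pow, algC]
    rfl
  have htop : (xx K) ^ f.natDegree / algebraMap (Polynomial K) (F K) f ∈ Rr K := by
    have hid : (xx K) ^ f.natDegree / algebraMap (Polynomial K) (F K) f
        = algebraMap K (F K) f.leadingCoeff⁻¹ *
          (1 - algebraMap (Polynomial K) (F K) f.eraseLead
            / algebraMap (Polynomial K) (F K) f) := by
      rw [map_inv₀]
      field_simp
      linear_combination (-1 : F K) * hfe
    rw [hid]
    refine const_mul_mem_R _ ((Rr K).sub_mem (Rr K).one_mem ?_)
    rcases f.eraseLead_natDegree_lt_or_eraseLead_eq_zero with hel | hel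
    · exact div_mem_of_lt hf hel
    · rw [hel]; simpa using (Rr K).zero_mem
  -- split g
  have hge : algebraMap (Polynomial K) (F K) g
      = algebraMap (Polynomial K) (F K) g.eraseLead
        + algebraMap K (F K) g.leadingCoeff * (xx K) ^ f.natDegree := by
    conv_lhs => rw [← eraseLead_add_C_mul_X_pow g]
    rw [map_add, map_mul, map_pow, algC, h]
    rfl
  rw [hge, add_div, mul_div_assoc]
  refine (Rr K).add_mem ?_ (const_mul_mem_R _ htop)
  rcases g.eraseLead_natDegree_lt_or_eraseLead_eq_zero with hel | hel
  · exact div_mem_of_lt hf (by omega)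
  · rw [hel]; simpa using (Rr K).zero_mem

end RecipAux
noncomputable section
namespace RecipAux
variable {K : Type*} [Field K]

lemma φ_X : φ (X : Polynomial K) = tt K := by simp [φ]

lemma φ_ne {p : Polynomial K} (hp : p ≠ 0) : φ p ≠ 0 := by
  intro h
  exact hp (φ_inj (by simpa using h))

def Sset (K : Type*) [Field K] : Set (F K) :=
  {z | ∃ a b : F K, a ∈ Asub ∧ b ∈ Asub ∧ (¬ ∃ c ∈ Asub (K := K), b = tt K * c) ∧ z = a / b}

lemma notdvd_iff {q : Polynomial K} :
    (¬ ∃ c ∈ Asub (K := K), φ q = tt K * c) ↔ q.coeff 0 ≠ 0 := by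
  constructor
  · intro hn
    intro h0
    apply hn
    refine ⟨φ q.divX, mem_Asub.mpr ⟨_, rfl⟩, ?_⟩
    have hq : q = X * q.divX := by
      conv_lhs => rw [← divX_mul_X_add q, h0]
      rw [C_0, add_zero, mul_comm]
    conv_lhs => rw [hq]
    rw [map_mul, φ_X]
  · rintro h0 ⟨c, hc, hbc⟩
    obtain ⟨r, rfl⟩ := mem_Asub.mp hc
    have : φ q = φ (X * r) := by rw [map_mul, φ_X]; exact hbc
    have hq : q = X * r := φ_inj this
    rw [hq, mul_coeff_zero, coeff_X_zero, zero_mul] at h0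
    exact h0 rfl

lemma mem_Sset_iff {z : F K} :
    z ∈ Sset K ↔ ∃ p q : Polynomial K, q.coeff 0 ≠ 0 ∧ z = φ p / φ q := by
  constructor
  · rintro ⟨a, b, ha, hb, hnd, rfl⟩
    obtain ⟨p, rfl⟩ := mem_Asub.mp ha
    obtain ⟨q, rfl⟩ := mem_Asub.mp hb
    exact ⟨p, q, notdvd_iff.mp hnd, rfl⟩
  · rintro ⟨p, q, h0, rfl⟩
    exact ⟨φ p, φ q, mem_Asub.mpr ⟨_, rfl⟩, mem_Asub.mpr ⟨_, rfl⟩, notdvd_iff.mpr h0, rfl⟩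

lemma reflect_reflect (p : Polynomial K) (N : ℕ) : reflect N (reflect N p) = p := by
  ext i
  rw [coeff_reflect, coeff_reflect, revAt_invol]

lemma φ_eq_alg_div (p : Polynomial K) (N : ℕ) (h : p.natDegree ≤ N) :
    φ p * (xx K) ^ N = algebraMap (Polynomial K) (F K) (reflect N p) := by
  have := φ_reflect_mul (reflect N p) N (natDegree_reflect_le h)
  rwa [reflect_reflect] at this

lemma Sset_subset_R : Sset K ⊆ (Rr K : Set (F K)) := by
  intro z hz
  obtain ⟨p, q, h0, rfl⟩ := mem_Sset_iff.mp hz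
  set N := max p.natDegree q.natDegree with hN
  have hp := φ_eq_alg_div p N (le_max_left _ _)
  have hq := φ_eq_alg_div q N (le_max_right _ _)
  have hqne : q ≠ 0 := fun h => h0 (by simp [h])
  have hrq : (reflect N q).coeff N ≠ 0 := by rwa [coeff_reflect_N]
  have hrqne : reflect N q ≠ 0 := fun h => hrq (by simp [h])
  have hdeg : (reflect N p).natDegree ≤ (reflect N q).natDegree := by
    have h1 : (reflect N p).natDegree ≤ N := natDegree_reflect_le (le_max_left _ _)
    have h2 : N ≤ (reflect N q).natDegree := le_natDegree_of_ne_zero hrq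
    omega
  have hxN : (xx K) ^ N ≠ 0 := pow_ne_zero _ hx
  have : φ p / φ q = algebraMap (Polynomial K) (F K) (reflect N p)
      / algebraMap (Polynomial K) (F K) (reflect N q) := by
    rw [← hp, ← hq]
    rw [mul_div_mul_right _ _ hxN]
  rw [this]
  exact div_mem_of_le hrqne hdeg

end RecipAux
noncomputable section
namespace RecipAux
variable {K : Type*} [Field K]

lemma one_mem_Sset : (1 : F K) ∈ Sset K :=
  mem_Sset_iff.mpr ⟨1, 1, by simp, by simp⟩

lemma zero_mem_Sset : (0 : F K) ∈ Sset K :=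
  mem_Sset_iff.mpr ⟨0, 1, by simp, by simp⟩

lemma mul_mem_Sset {z w : F K} (hz : z ∈ Sset K) (hw : w ∈ Sset K) : z * w ∈ Sset K := by
  obtain ⟨p1, q1, h1, rfl⟩ := mem_Sset_iff.mp hz
  obtain ⟨p2, q2, h2, rfl⟩ := mem_Sset_iff.mp hw
  refine mem_Sset_iff.mpr ⟨p1 * p2, q1 * q2, ?_, ?_⟩
  · rw [mul_coeff_zero]; exact mul_ne_zero h1 h2
  · rw [map_mul, map_mul, div_mul_div_comm]

lemma neg_mem_Sset {z : F K} (hz : z ∈ Sset K) : -z ∈ Sset K := by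
  obtain ⟨p1, q1, h1, rfl⟩ := mem_Sset_iff.mp hz
  exact mem_Sset_iff.mpr ⟨-p1, q1, h1, by rw [map_neg, neg_div]⟩

lemma add_mem_Sset {z w : F K} (hz : z ∈ Sset K) (hw : w ∈ Sset K) : z + w ∈ Sset K := by
  obtain ⟨p1, q1, h1, rfl⟩ := mem_Sset_iff.mp hz
  obtain ⟨p2, q2, h2, rfl⟩ := mem_Sset_iff.mp hw
  refine mem_Sset_iff.mpr ⟨p1 * q2 + p2 * q1, q1 * q2, ?_, ?_⟩
  · rw [mul_coeff_zero]; exact mul_ne_zero h1 h2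
  · have hq1 : φ q1 ≠ 0 := φ_ne fun h => h1 (by simp [h])
    have hq2 : φ q2 ≠ 0 := φ_ne fun h => h2 (by simp [h])
    push_cast [map_add, map_mul]
    field_simp

def SS (K : Type*) [Field K] : Subring (F K) where
  carrier := Sset K
  one_mem' := one_mem_Sset
  zero_mem' := zero_mem_Sset
  mul_mem' := mul_mem_Sset
  add_mem' := add_mem_Sset
  neg_mem' := neg_mem_Sset

lemma gen_mem_Sset {f : Polynomial K} (hf : f ≠ 0) :
    (algebraMap (Polynomial K) (F K) f)⁻¹ ∈ Sset K := by
  set N := f.natDegree with hN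
  have h0 : (reflect N f).coeff 0 ≠ 0 := by
    rw [coeff_reflect, revAt_le (Nat.zero_le N), Nat.sub_zero]
    exact leadingCoeff_ne_zero.mpr hf
  refine mem_Sset_iff.mpr ⟨X ^ N, reflect N f, h0, ?_⟩
  have hr := φ_reflect_mul f N le_rfl
  have hxN : (xx K) ^ N ≠ 0 := pow_ne_zero _ hx
  have hφr : φ (reflect N f) ≠ 0 := φ_ne (fun h => h0 (by simp [h]))
  have hφX : φ (X ^ N : Polynomial K) = (tt K) ^ N := by rw [map_pow, φ_X]
  rw [hφX]
  rw [eq_div_iff hφr]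
  have hF := algNe hf
  field_simp [tt] at hr ⊢
  rw [← hr, tt, inv_pow, mul_assoc, mul_inv_cancel₀ hxN, mul_one]

lemma R_subset_Sset : (Rr K : Set (F K)) ⊆ Sset K := by
  have : Rr K ≤ SS K := Subring.closure_le.mpr (by
    rintro z ⟨f, hf, rfl⟩
    exact gen_mem_Sset hf)
  exact this

lemma R_eq_Sset : (Rr K : Set (F K)) = Sset K :=
  Set.Subset.antisymm R_subset_Sset Sset_subset_R

end RecipAux
noncomputable section
namespace RecipAux
variable {K : Type*} [Field K]

lemma exists_X_pow_mul (p : Polynomial K) (hp : p ≠ 0) :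
    ∃ (n : ℕ) (p' : Polynomial K), p = X ^ n * p' ∧ p'.coeff 0 ≠ 0 := by
  by_cases h0 : p.coeff 0 ≠ 0
  · exact ⟨0, p, by simp, h0⟩
  push_neg at h0
  have hq : p = X * p.divX := by
    conv_lhs => rw [← divX_mul_X_add p, h0]
    rw [C_0, add_zero, mul_comm]
  have hdne : p.divX ≠ 0 := by
    intro h; rw [h, mul_zero] at hq; exact hp hq
  have hdeg : p.divX.natDegree < p.natDegree := by
    rw [natDegree_divX_eq_natDegree_tsub_one]
    have : p.natDegree ≠ 0 := by
      intro h
      have := eq_C_of_natDegree_le_zero (le_of_eq h)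
      rw [this, h0, C_0] at hp; exact hp rfl
    omega
  obtain ⟨n, p', hp', h0'⟩ := exists_X_pow_mul p.divX hdne
  exact ⟨n + 1, p', by rw [hq, hp']; ring, h0'⟩
termination_by p.natDegree
decreasing_by exact hdeg

def T (K : Type*) [Field K] : Rr K := ⟨tt K, t_mem_R⟩

lemma mem_R_of_Sset {z : F K} (h : z ∈ Sset K) : z ∈ Rr K := Sset_subset_R h
lemma mem_Sset_of_R {z : F K} (h : z ∈ Rr K) : z ∈ Sset K := R_subset_Sset h

lemma unit_of_Sset {p q : Polynomial K} (hp : p.coeff 0 ≠ 0) (hq : q.coeff 0 ≠ 0) :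
    ∃ u : (Rr K)ˣ, (u : Rr K) = (⟨φ p / φ q,
      mem_R_of_Sset (mem_Sset_iff.mpr ⟨p, q, hq, rfl⟩)⟩ : Rr K) := by
  have hpne : φ p ≠ 0 := φ_ne fun h => hp (by simp [h])
  have hqne : φ q ≠ 0 := φ_ne fun h => hq (by simp [h])
  have hz : φ p / φ q ≠ 0 := div_ne_zero hpne hqne
  have hmem : φ p / φ q ∈ Rr K := mem_R_of_Sset (mem_Sset_iff.mpr ⟨p, q, hq, rfl⟩)
  have hmem' : φ q / φ p ∈ Rr K := mem_R_of_Sset (mem_Sset_iff.mpr ⟨q, p, hp, rfl⟩)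
  refine ⟨⟨⟨φ p / φ q, hmem⟩, ⟨φ q / φ p, hmem'⟩, ?_, ?_⟩, rfl⟩
  · ext; push_cast; field_simp
  · ext; push_cast; field_simp

lemma key_decomp (z : Rr K) (hz : z ≠ 0) :
    ∃ (n : ℕ) (u : (Rr K)ˣ), z = T K ^ n * u := by
  have hzS : (z : F K) ∈ Sset K := mem_Sset_of_R z.2
  obtain ⟨p, q, hq, hpq⟩ := mem_Sset_iff.mp hzS
  have hqne : φ q ≠ 0 := φ_ne fun h => hq (by simp [h])
  have hpne : p ≠ 0 := by
    intro h
    apply hz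
    ext
    rw [hpq, h, map_zero, zero_div]
    rfl
  obtain ⟨n, p', hp', h0'⟩ := exists_X_pow_mul p hpne
  obtain ⟨u, hu⟩ := unit_of_Sset (K := K) h0' hq
  refine ⟨n, u, ?_⟩
  ext
  rw [hu]
  push_cast
  rw [hpq, hp', map_mul, map_pow, φ_X]
  show tt K ^ n * φ p' / φ q = tt K ^ n * (φ p' / φ q)
  rw [mul_div_assoc]

lemma T_ne_zero : T K ≠ 0 := by
  intro h
  have : tt K = 0 := congrArg Subtype.val h
  exact ht this

lemma T_not_unit : ¬ IsUnit (T K) := by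
  rintro ⟨w, hw⟩
  have hinv : (tt K) * (((w⁻¹ : (Rr K)ˣ) : Rr K) : F K) = 1 := by
    have h2 := w.mul_inv
    rw [hw] at h2
    have h3 := congrArg Subtype.val h2
    push_cast at h3
    exact h3
  have hval : (((w⁻¹ : (Rr K)ˣ) : Rr K) : F K) = xx K := by
    have h4 := inv_eq_of_mul_eq_one_right hinv
    rw [← h4, tt, inv_inv]
  have hxxR : xx K ∈ Rr K := hval ▸ ((w⁻¹ : (Rr K)ˣ) : Rr K).2
  have hxxS : xx K ∈ Sset K := mem_Sset_of_R hxxR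
  obtain ⟨p, q, hq, hpq⟩ := mem_Sset_iff.mp hxxS
  have hqne : φ q ≠ 0 := φ_ne fun h => hq (by simp [h])
  have h1 : φ q = φ (X * p) := by
    rw [map_mul, φ_X]
    have : xx K * φ q = φ p := by
      rw [hpq]; field_simp
    calc φ q = tt K * (xx K * φ q) := by
          rw [← mul_assoc, htx, one_mul]
      _ = tt K * φ p := by rw [this]
  have := φ_inj h1
  rw [this, mul_coeff_zero, coeff_X_zero, zero_mul] at hq
  exact hq rfl

end RecipAux
noncomputable section
namespace RecipAux
variable {K : Type*} [Field K]

lemma T_irreducible : Irreducible (T K) := by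
  refine ⟨T_not_unit, ?_⟩
  intro a b hab
  by_contra hcon
  push_neg at hcon
  obtain ⟨hna, hnb⟩ := hcon
  have ha0 : a ≠ 0 := by rintro rfl; rw [zero_mul] at hab; exact T_ne_zero hab
  have hb0 : b ≠ 0 := by rintro rfl; rw [mul_zero] at hab; exact T_ne_zero hab
  obtain ⟨n, u, hu⟩ := key_decomp a ha0
  obtain ⟨m, v, hv⟩ := key_decomp b hb0
  have hn : n ≠ 0 := by
    rintro rfl; rw [pow_zero, one_mul] at hu; exact hna (hu ▸ u.isUnit)
  have hm : m ≠ 0 := by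
    rintro rfl; rw [pow_zero, one_mul] at hv; exact hnb (hv ▸ v.isUnit)
  obtain ⟨j, hj⟩ : ∃ j, n + m = j + 2 := ⟨n + m - 2, by omega⟩
  have h2 : T K = T K ^ (n + m) * ((u : Rr K) * (v : Rr K)) := by
    conv_lhs => rw [hab, hu, hv]
    rw [pow_add]; ring
  rw [hj] at h2
  have h3 : T K * 1 = T K * (T K ^ (j + 1) * ((u : Rr K) * (v : Rr K))) := by
    calc T K * 1 = T K ^ (j + 2) * ((u : Rr K) * (v : Rr K)) := by rw [mul_one]; exact h2
      _ = T K * (T K ^ (j + 1) * ((u : Rr K) * (v : Rr K))) := by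
          rw [pow_succ, pow_succ]; ring
  have h4 := mul_left_cancel₀ T_ne_zero h3
  have : IsUnit (T K) := by
    refine IsUnit.of_mul_eq_one (T K ^ j * ((u : Rr K) * (v : Rr K))) ?_
    calc T K * (T K ^ j * ((u : Rr K) * (v : Rr K)))
        = T K ^ (j + 1) * ((u : Rr K) * (v : Rr K)) := by rw [pow_succ]; ring
      _ = 1 := h4.symm
  exact T_not_unit this

lemma dvr_R : IsDiscreteValuationRing (Rr K) := by
  apply IsDiscreteValuationRing.ofHasUnitMulPowIrreducibleFactorization
  refine ⟨T K, T_irreducible, ?_⟩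
  intro z hz
  obtain ⟨n, u, hu⟩ := key_decomp z hz
  exact ⟨n, u, hu.symm⟩

lemma span_T_maximal : (Ideal.span {T K}).IsMaximal := by
  haveI := dvr_R (K := K)
  have h := (IsDiscreteValuationRing.irreducible_iff_uniformizer (T K)).mp T_irreducible
  rw [← h]
  exact IsLocalRing.maximalIdeal.isMaximal _

end RecipAux
/-- For `D = K[x]`, `R(D)` is a discrete valuation ring whose maximal
ideal is generated by `1/x`; in fact `R(D)` is the localization of `K[x⁻¹]` at the
prime ideal `(x⁻¹)`. -/
theorem stmt_4 (K : Type*) [Field K] :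
    letI F := FractionRing (Polynomial K)
    letI xinv : F := (algebraMap (Polynomial K) F Polynomial.X)⁻¹
    letI A : Subring F := Subring.closure (Set.range (algebraMap K F) ∪ {xinv})
    IsDiscreteValuationRing (recip (Polynomial K)) ∧
    (Ideal.span {(⟨xinv, Subring.subset_closure ⟨Polynomial.X, Polynomial.X_ne_zero, rfl⟩⟩ :
        recip (Polynomial K))}).IsMaximal ∧
    (recip (Polynomial K) : Set F) =
      {z | ∃ a b : F, a ∈ A ∧ b ∈ A ∧ (¬ ∃ c ∈ A, b = xinv * c) ∧ z = a / b} := by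
  refine ⟨RecipAux.dvr_R, ?_, ?_⟩
  · exact RecipAux.span_T_maximal
  · exact RecipAux.R_eq_Sset
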